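/- arXiv:1201.5316 — 2 statements merged into one kernel-verified Lean document; each statement's English description precedes it below -/
import Mathlib

section
/- For every polynomial P ∈ ℚ⟨x,y⟩, one has s(xP) = x·s(P) − s(P)·x = [x, s(P)]. -/
/- Common setup: the ring ℚ⟨x,y⟩ of polynomials in two non-commuting variables,
   modelled as the monoid algebra of the free monoid on two letters
   (letter 0 ↦ x, letter 1 ↦ y). -/

abbrev Word := FreeMonoid (Fin 2)
abbrev R2 := MonoidAlgebra ℚ Word

attribute [local instance 100] LieRing.ofAssociativeRing

noncomputable section
namespace DblSh

/-- The variable x. -/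
def X : R2 := MonoidAlgebra.of ℚ Word (FreeMonoid.of 0)
/-- The variable y. -/
def Y : R2 := MonoidAlgebra.of ℚ Word (FreeMonoid.of 1)
/-- The monomial associated to a word. -/
def mono (w : Word) : R2 := MonoidAlgebra.single w 1
/-- (f|w), the coefficient of the monomial w in f. -/
def coeff (f : R2) (w : Word) : ℚ := f.coeff w
/-- The pairing (f|g) = Σ_w (g|w)·(f|w), i.e. (f|·) extended linearly. -/
def pairing (f g : R2) : ℚ := Finsupp.sum g.coeff (fun w c => c * f.coeff w)
/-- Degree of a word. -/
def wlen (w : Word) : ℕ := (FreeMonoid.toList w).length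
/-- Depth of a word: the number of letters y. -/
def countY (w : Word) : ℕ := (FreeMonoid.toList w).count 1

/-- Lie[x,y]: the Lie subalgebra of ℚ⟨x,y⟩ generated by x and y (the free Lie algebra). -/
def LieP : LieSubalgebra ℚ R2 := LieSubalgebra.lieSpan ℚ R2 {X, Y}
/-- f is homogeneous of degree n. -/
def IsHomog (n : ℕ) (f : R2) : Prop := ∀ w ∈ f.coeff.support, wlen w = n
/-- f ∈ Lie_n[x,y]. -/
def InLieN (n : ℕ) (f : R2) : Prop := f ∈ LieP ∧ IsHomog n f

/-- `anti` on words: reversal. -/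
def antiW (w : Word) : Word := FreeMonoid.ofList (FreeMonoid.toList w).reverse
/-- The linear operator `anti` reversing each monomial. -/
def anti (f : R2) : R2 := MonoidAlgebra.mapDomain antiW f
/-- f (homogeneous of degree m) is antipalindromic: f = (−1)^m · anti f. -/
def Antipal (m : ℕ) (f : R2) : Prop := f = ((-1 : ℚ))^m • anti f

/-- `push` on a word containing at least one y:
    push(x^{a₀}y⋯y x^{a_{r-1}} y x^{a_r}) = x^{a_r} y x^{a₀} y ⋯ y x^{a_{r-1}};
    words with no y are left fixed. -/
def pushW (w : Word) : Word :=
  let l := (FreeMonoid.toList w).reverse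
  let t := l.takeWhile (fun c => c = 0)
  match l.dropWhile (fun c => c = 0) with
  | [] => w
  | _ :: rest => FreeMonoid.ofList (t.reverse ++ (1 :: rest.reverse))
/-- `push` extended linearly to polynomials. -/
def pushP (f : R2) : R2 := MonoidAlgebra.mapDomain pushW f
/-- The list Push(w) of the r+1 iterates of push on w (r = depth of w). -/
def PushList (w : Word) : List Word := (List.range (countY w + 1)).map (fun k => pushW^[k] w)
/-- The word y^m. -/
def yPow (m : ℕ) : Word := FreeMonoid.ofList (List.replicate m 1)
/-- f (homogeneous of degree m) is push-constant for the constant A. -/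
def PushConst (m : ℕ) (f : R2) (A : ℚ) : Prop :=
  coeff f (yPow m) = 0 ∧
  ∀ w : Word, wlen w = m → w ≠ yPow m → ((PushList w).map (fun v => coeff f v)).sum = A

/-- ∂_x on a word (Leibniz expansion). -/
def dxW (w : Word) : R2 :=
  ∑ i ∈ Finset.range (wlen w),
    if (FreeMonoid.toList w).getD i 1 = 0
    then mono (FreeMonoid.ofList ((FreeMonoid.toList w).eraseIdx i)) else 0
/-- The derivation ∂_x of ℚ⟨x,y⟩, with ∂_x(x) = 1 and ∂_x(y) = 0. -/
def dx (f : R2) : R2 := Finsupp.sum f.coeff (fun w c => c • dxW w)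
/-- s(h) = Σ_{i≥0} ((−1)^i/i!)·∂_x^i(h)·y·x^i. -/
def sMap (h : R2) : R2 := ∑ᶠ i : ℕ, ((-1 : ℚ)^i / (i.factorial : ℚ)) • (dx^[i] h * Y * X ^ i)
/-- s'(h) = Σ_{i≥0} ((−1)^i/i!)·x^i·y·∂_x^i(h). -/
def s'Map (h : R2) : R2 := ∑ᶠ i : ℕ, ((-1 : ℚ)^i / (i.factorial : ℚ)) • (X ^ i * Y * dx^[i] h)

/-- The algebra endomorphism of ℚ⟨x,y⟩ with x ↦ a, y ↦ b. -/
def subst (a b : R2) : R2 →ₐ[ℚ] R2 :=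
  MonoidAlgebra.lift ℚ R2 Word (FreeMonoid.lift (fun i : Fin 2 => if i = 0 then a else b))

/-- The value on a word of the derivation of ℚ⟨x,y⟩ with x ↦ a, y ↦ b (Leibniz expansion). -/
def derW (a b : R2) (w : Word) : R2 :=
  ∑ i ∈ Finset.range (wlen w),
    mono (FreeMonoid.ofList ((FreeMonoid.toList w).take i)) *
      (if (FreeMonoid.toList w).getD i 1 = 0 then a else b) *
      mono (FreeMonoid.ofList ((FreeMonoid.toList w).drop (i+1)))
/-- The derivation of ℚ⟨x,y⟩ with x ↦ a, y ↦ b. -/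
def derP (a b : R2) (f : R2) : R2 := Finsupp.sum f.coeff (fun w c => c • derW a b w)
/-- The derivation D_{F,G} with x ↦ [x,G], y ↦ [y,F]. -/
def DFG (F G : R2) : R2 → R2 := derP (X * G - G * X) (Y * F - F * Y)

/-- The subspace of ℚ⟨x,y⟩ spanned by all commutators ab − ba. -/
def trIdeal : Submodule ℚ R2 := Submodule.span ℚ {c : R2 | ∃ a b : R2, c = a * b - b * a}
/-- TR, the trace space. -/
abbrev TRsp := R2 ⧸ trIdeal
/-- The trace map tr : ℚ⟨x,y⟩ → TR. -/
def trQ : R2 →ₗ[ℚ] TRsp := trIdeal.mkQ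

/-- Generators of krv2: the special derivations D_{F,G}, F,G ∈ Lie_n[x,y] (n ≥ 1),
    satisfying the trace condition tr(F_y·y + G_x·x) = A·tr((x+y)^n − x^n − y^n). -/
def krvGens : Set (R2 → R2) :=
  {D | ∃ n : ℕ, 1 ≤ n ∧ ∃ F G : R2, InLieN n F ∧ InLieN n G ∧ D = DFG F G ∧
    (X * G - G * X) + (Y * F - F * Y) = 0 ∧
    ∃ Fx Fy Gx Gy : R2, F = Fx * X + Fy * Y ∧ G = Gx * X + Gy * Y ∧
      ∃ A : ℚ, trQ (Fy * Y + Gx * X) = A • trQ ((X + Y)^n - X^n - Y^n)}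
/-- The Kashiwara–Vergne Lie algebra krv2, as a space of operators. -/
def krv2 : Submodule ℚ (R2 → R2) := Submodule.span ℚ krvGens

/-- The space V_kv of Theorem 1.2. -/
def Vkv : Submodule ℚ R2 :=
  Submodule.span ℚ {F : R2 | ∃ n : ℕ, 3 ≤ n ∧ InLieN n F ∧
    ∃ Fx Fy : R2, F = Fx * X + Fy * Y ∧ Antipal (n-1) Fy ∧ ∃ A : ℚ, PushConst (n-1) (Fy - Fx) A}

/-- y_i = x^{i-1}y. -/
def yi (i : ℕ) : Word := FreeMonoid.ofList (List.replicate (i - 1) 0 ++ [1])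
/-- The word y_{i₁}⋯y_{i_k} associated to a composition (i₁,…,i_k). -/
def wordOfComp (l : List ℕ) : Word := (l.map yi).prod
/-- The stuffle product of two words ending in y, encoded as compositions. -/
def st : List ℕ → List ℕ → R2
  | [], v => mono (wordOfComp v)
  | u, [] => mono (wordOfComp u)
  | i :: u, j :: v =>
      mono (yi i) * st u (j :: v) + mono (yi j) * st (i :: u) v + mono (yi (i + j)) * st u v
termination_by u v => u.length + v.length

/-- Membership in the double shuffle Lie algebra ds. -/
def inDS (f : R2) : Prop :=
  f ∈ LieP ∧ (∀ w ∈ f.coeff.support, 3 ≤ wlen w) ∧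
  ∀ u v : List ℕ, u ≠ [] → v ≠ [] → (∀ i ∈ u, 1 ≤ i) → (∀ i ∈ v, 1 ≤ i) →
    ¬((∀ i ∈ u, i = 1) ∧ (∀ i ∈ v, i = 1)) → pairing f (st u v) = 0
/-- Membership in ds_n = ds ∩ Lie_n[x,y]. -/
def inDSn (n : ℕ) (f : R2) : Prop := inDS f ∧ IsHomog n f

/-- The derivation D_f with x ↦ 0, y ↦ [y,f]. -/
def Dlow (f : R2) : R2 → R2 := derP 0 (Y * f - f * Y)
/-- The Poisson bracket {f,g} = [f,g] + D_f(g) − D_g(f). -/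
def poisson (f g : R2) : R2 := (f * g - g * f) + Dlow f g - Dlow g f

/-- The projection f ↦ f^x, where f = x·f^x + y·f^y (f without constant term). -/
def compL (f : R2) : R2 :=
  MonoidAlgebra.ofCoeff (Finsupp.comapDomain (fun w : Word => FreeMonoid.of 0 * w) f.coeff
    (Set.injOn_of_injective (mul_right_injective (FreeMonoid.of 0))))

-- ### auxiliary lemmas for stmt5 ###

lemma dx_single (w : Word) (c : ℚ) : dx (MonoidAlgebra.single w c) = c • dxW w := by
  simp [dx, Finsupp.sum_single_index]

def dxL : R2 →ₗ[ℚ] R2 := (Finsupp.lsum ℚ (fun w => LinearMap.toSpanSingleton ℚ R2 (dxW w))).comp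
    (MonoidAlgebra.coeffLinearEquiv ℚ).toLinearMap

lemma dx_eq_dxL (f : R2) : dx f = dxL f := rfl

lemma dx_add (f g : R2) : dx (f + g) = dx f + dx g := by
  simp [dx_eq_dxL, map_add]

lemma dx_smul (c : ℚ) (f : R2) : dx (c • f) = c • dx f := by
  simp [dx_eq_dxL, map_smul]

lemma dx_zero : dx (0 : R2) = 0 := by simp [dx_eq_dxL]

lemma mono_cons (l : List (Fin 2)) :
    mono (FreeMonoid.ofList (0 :: l)) = X * mono (FreeMonoid.ofList l) := by
  have h : (FreeMonoid.of (0 : Fin 2)) * FreeMonoid.ofList l = FreeMonoid.ofList (0 :: l) := rfl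
  rw [mono, mono, X, MonoidAlgebra.of_apply, MonoidAlgebra.single_mul_single, one_mul, h]

lemma dxW_cons (w : Word) : dxW (FreeMonoid.of 0 * w) = mono w + X * dxW w := by
  have hl : FreeMonoid.toList (FreeMonoid.of (0:Fin 2) * w) = 0 :: FreeMonoid.toList w := rfl
  have hlen : wlen (FreeMonoid.of 0 * w) = wlen w + 1 := by simp [wlen, hl]
  rw [dxW, hlen, Finset.sum_range_succ', add_comm]
  congr 1
  rw [dxW, Finset.mul_sum]
  refine Finset.sum_congr rfl fun i _ => ?_
  rw [hl, List.getD_cons_succ, List.eraseIdx_cons_succ, mul_ite, mul_zero, mono_cons]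

lemma X_mul_single (w : Word) (c : ℚ) :
    X * MonoidAlgebra.single w c = MonoidAlgebra.single (FreeMonoid.of 0 * w) c := by
  rw [X, MonoidAlgebra.of_apply, MonoidAlgebra.single_mul_single, one_mul]

lemma dx_X_mul (f : R2) : dx (X * f) = f + X * dx f := by
  induction f using MonoidAlgebra.induction_linear with
  | zero => simp [dx_zero]
  | add f g hf hg =>
      rw [mul_add, dx_add, hf, hg, dx_add, mul_add]; abel
  | single w c =>
      rw [X_mul_single, dx_single, dx_single, dxW_cons, smul_add, mul_smul_comm]
      congr 1
      rw [mono, MonoidAlgebra.smul_single', mul_one]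

lemma dx_iter_X_mul (f : R2) : ∀ i : ℕ,
    dx^[i+1] (X * f) = X * dx^[i+1] f + ((i:ℚ)+1) • dx^[i] f := by
  intro i
  induction i with
  | zero => simp only [Function.iterate_one, Nat.cast_zero, zero_add, one_smul,
        Function.iterate_zero, id_eq, dx_X_mul f, add_comm]
  | succ i ih =>
      rw [Function.iterate_succ_apply' dx (i+1), ih, dx_add, dx_smul, dx_X_mul,
        ← Function.iterate_succ_apply' dx (i+1), ← Function.iterate_succ_apply' dx i]
      push_cast
      module

lemma dx_support_lt {n : ℕ} {f : R2} (h : ∀ w ∈ f.coeff.support, wlen w < n + 1) :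
    ∀ u ∈ (dx f).coeff.support, wlen u < n := by
  classical
  intro u hu
  rw [dx, MonoidAlgebra.coeff_finsuppSum] at hu
  have h1 := Finsupp.support_sum hu
  rw [Finset.mem_biUnion] at h1
  obtain ⟨w, hw, hu2⟩ := h1
  rw [MonoidAlgebra.coeff_smul] at hu2
  have h2 : u ∈ (dxW w).coeff.support := Finsupp.support_smul hu2
  rw [dxW, MonoidAlgebra.coeff_sum] at h2
  have h3 := Finsupp.support_finset_sum (s := Finset.range (wlen w))
    (f := fun i => MonoidAlgebra.coeff (if (FreeMonoid.toList w).getD i 1 = 0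
      then mono (FreeMonoid.ofList ((FreeMonoid.toList w).eraseIdx i)) else 0)) h2
  rw [Finset.mem_biUnion] at h3
  obtain ⟨i, hi, hu3⟩ := h3
  rw [Finset.mem_range] at hi
  split at hu3
  · have h4 : u = FreeMonoid.ofList ((FreeMonoid.toList w).eraseIdx i) := by
      rw [mono, MonoidAlgebra.coeff_single] at hu3
      have := Finsupp.support_single_subset hu3
      simpa using this
    have h5 : wlen u = wlen w - 1 := by
      rw [h4]
      show ((FreeMonoid.toList w).eraseIdx i).length = wlen w - 1
      rw [List.length_eraseIdx]
      simp only [wlen] at hi ⊢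
      rw [if_pos hi]
    have := h w hw
    omega
  · simp at hu3

lemma dx_iter_vanish (f : R2) : ∃ N : ℕ, ∀ i : ℕ, N ≤ i → dx^[i] f = 0 := by
  obtain ⟨n, hn⟩ : ∃ n : ℕ, ∀ w ∈ f.coeff.support, wlen w < n := by
    refine ⟨(f.coeff.support.sup wlen) + 1, fun w hw => ?_⟩
    exact Nat.lt_succ_of_le (Finset.le_sup hw)
  refine ⟨n, fun i hi => ?_⟩
  have key : ∀ m : ℕ, ∀ g : R2, (∀ w ∈ g.coeff.support, wlen w < m) → dx^[m] g = 0 := by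
    intro m
    induction m with
    | zero =>
        intro g hg
        have : g = 0 := by
          ext w
          by_contra hc
          exact absurd (hg w (Finsupp.mem_support_iff.mpr hc)) (Nat.not_lt_zero _)
        simp [this]
    | succ m ih =>
        intro g hg
        rw [Function.iterate_succ_apply]
        exact ih (dx g) (dx_support_lt hg)
  have h0 : dx^[n] f = 0 := key n f hn
  have : dx^[i] f = dx^[i - n] (dx^[n] f) := by
    rw [← Function.iterate_add_apply]
    congr 1
    omega
  rw [this, h0]
  exact Function.iterate_fixed dx_zero _

lemma coeff_fact (j : ℕ) :
    ((-1 : ℚ)^(j+1) / ((j+1).factorial : ℚ)) * ((j:ℚ)+1) = -((-1 : ℚ)^j / (j.factorial : ℚ)) := by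
  have h1 : ((j+1).factorial : ℚ) = ((j:ℚ)+1) * (j.factorial : ℚ) := by
    rw [Nat.factorial_succ]; push_cast; ring
  have h2 : (j.factorial : ℚ) ≠ 0 := Nat.cast_ne_zero.mpr (Nat.factorial_ne_zero j)
  have h3 : ((j:ℚ)+1) ≠ 0 := by positivity
  rw [h1]
  field_simp
  ring

set_option maxHeartbeats 1000000 in
theorem stmt5' (P : R2) :
    sMap (X * P) = X * sMap P - sMap P * X := by
  obtain ⟨N, hN⟩ := dx_iter_vanish P
  set c : ℕ → ℚ := fun i => (-1 : ℚ)^i / (i.factorial : ℚ) with hc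
  have hXP : ∀ i : ℕ, N + 1 ≤ i → dx^[i] (X * P) = 0 := by
    intro i hi
    obtain ⟨j, rfl⟩ : ∃ j, i = j + 1 := ⟨i - 1, by omega⟩
    rw [dx_iter_X_mul, hN _ (by omega), hN _ (by omega), mul_zero, smul_zero, add_zero]
  have hsP : sMap P = ∑ i ∈ Finset.range (N+2), c i • (dx^[i] P * Y * X ^ i) := by
    apply finsum_eq_sum_of_support_subset
    intro i hi
    simp only [Function.mem_support, ne_eq] at hi
    by_contra hmem
    apply hi
    have : N ≤ i := by
      simp only [Finset.mem_coe, Finset.mem_range, not_lt] at hmem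
      omega
    rw [hN i this]
    simp
  have hsP1 : sMap P = ∑ i ∈ Finset.range (N+1), c i • (dx^[i] P * Y * X ^ i) := by
    apply finsum_eq_sum_of_support_subset
    intro i hi
    simp only [Function.mem_support, ne_eq] at hi
    by_contra hmem
    apply hi
    have : N ≤ i := by
      simp only [Finset.mem_coe, Finset.mem_range, not_lt] at hmem
      omega
    rw [hN i this]
    simp
  have hsXP : sMap (X * P) = ∑ i ∈ Finset.range (N+2), c i • (dx^[i] (X * P) * Y * X ^ i) := by
    apply finsum_eq_sum_of_support_subset
    intro i hi
    simp only [Function.mem_support, ne_eq] at hi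
    by_contra hmem
    apply hi
    have : N + 1 ≤ i := by
      simp only [Finset.mem_coe, Finset.mem_range, not_lt] at hmem
      omega
    rw [hXP i this]
    simp
  have key : ∀ j ∈ Finset.range (N+1),
      c (j+1) • (dx^[j+1] (X * P) * Y * X ^ (j+1))
      = c (j+1) • (X * (dx^[j+1] P * Y * X ^ (j+1)))
        - c j • ((dx^[j] P * Y * X ^ j) * X) := by
    intro j _
    rw [dx_iter_X_mul, add_mul, add_mul, smul_add, sub_eq_add_neg]
    congr 1
    · simp only [mul_assoc]
    · rw [smul_mul_assoc, smul_mul_assoc, smul_smul, hc]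
      simp only []
      rw [coeff_fact, neg_smul, neg_inj, pow_succ, ← mul_assoc]
  have e1 : ∑ j ∈ Finset.range (N+1), c (j+1) • (X * (dx^[j+1] P * Y * X ^ (j+1)))
      = X * ∑ j ∈ Finset.range (N+1), c (j+1) • (dx^[j+1] P * Y * X ^ (j+1)) := by
    rw [Finset.mul_sum]
    exact Finset.sum_congr rfl fun j _ => (mul_smul_comm _ _ _).symm
  have e2 : ∑ j ∈ Finset.range (N+1), c j • ((dx^[j] P * Y * X ^ j) * X)
      = (∑ j ∈ Finset.range (N+1), c j • (dx^[j] P * Y * X ^ j)) * X := by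
    rw [Finset.sum_mul]
    exact Finset.sum_congr rfl fun j _ => (smul_mul_assoc _ _ _).symm
  have hsP2 : sMap P = (∑ j ∈ Finset.range (N+1), c (j+1) • (dx^[j+1] P * Y * X ^ (j+1)))
      + c 0 • (P * Y) := by
    rw [hsP, Finset.sum_range_succ' _ (N+1)]
    simp only [Function.iterate_zero, id_eq, pow_zero, mul_one]
  rw [hsXP, Finset.sum_range_succ' _ (N+1), Finset.sum_congr rfl key,
    Finset.sum_sub_distrib, e1, e2, ← hsP1, hsP2]
  simp only [Function.iterate_zero, id_eq, pow_zero, mul_one]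
  rw [mul_add, mul_smul_comm, ← mul_assoc]
  abel


/-- for every P ∈ ℚ⟨x,y⟩, s(xP) = x·s(P) − s(P)·x = [x, s(P)]. -/
theorem stmt5 (P : R2) :
    sMap (X * P) = X * sMap P - sMap P * X ∧ sMap (X * P) = ⁅X, sMap P⁆ := by
  refine ⟨stmt5' P, ?_⟩
  rw [Ring.lie_def]
  exact stmt5' P

end DblSh
end
end

section
/- Let g ∈ ℚ⟨x,y⟩ be homogeneous of degree n, let φ = a·x + b·y and ψ = c·x + d·y with a,b,c,d ∈ ℚ, and let h = g(φ,ψ) be the image of g under the algebra endomorphism x ↦ φ, y ↦ ψ. If g is antipalindromic, then h is antipalindromic. -/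
noncomputable section
namespace DblSh

attribute [local instance] LieRing.ofAssociativeRing LieAlgebra.ofAssociativeAlgebra

lemma antiW_mul (u v : Word) : antiW (u * v) = antiW v * antiW u := by
  simp [antiW, FreeMonoid.toList_mul, List.reverse_append, FreeMonoid.ofList_append]

lemma anti_single (w : Word) (c : ℚ) :
    anti (MonoidAlgebra.single w c) = MonoidAlgebra.single (antiW w) c :=
  MonoidAlgebra.mapDomain_single

lemma anti_add (f g : R2) : anti (f + g) = anti f + anti g := MonoidAlgebra.mapDomain_add _ _ _

lemma anti_smul (c : ℚ) (f : R2) : anti (c • f) = c • anti f := by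
  unfold anti
  rw [MonoidAlgebra.mapDomain_smul]

lemma anti_mul (f g : R2) : anti (f * g) = anti g * anti f := by
  induction f using MonoidAlgebra.induction_linear with
  | zero => simp [anti, MonoidAlgebra.mapDomain_zero]
  | add p q hp hq => rw [add_mul, anti_add, hp, hq, anti_add, mul_add]
  | single u a =>
    induction g using MonoidAlgebra.induction_linear with
    | zero => simp [anti, MonoidAlgebra.mapDomain_zero]
    | add p q hp hq => rw [mul_add, anti_add, hp, hq, anti_add, add_mul]
    | single v b =>
      rw [MonoidAlgebra.single_mul_single, anti_single, anti_single, anti_single,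
        MonoidAlgebra.single_mul_single, antiW_mul, mul_comm b a]

lemma anti_X : anti X = X := by
  simp [X, MonoidAlgebra.of_apply, anti_single, antiW]

lemma anti_Y : anti Y = Y := by
  simp [Y, MonoidAlgebra.of_apply, anti_single, antiW]

lemma anti_one : anti (1 : R2) = 1 := by
  rw [MonoidAlgebra.one_def, anti_single]; rfl

lemma anti_comb (a b : ℚ) : anti (a • X + b • Y) = a • X + b • Y := by
  rw [anti_add, anti_smul, anti_smul, anti_X, anti_Y]

lemma anti_subst_mono (a b c d : ℚ) (w : Word) :
    anti (subst (a • X + b • Y) (c • X + d • Y) (mono w))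
      = subst (a • X + b • Y) (c • X + d • Y) (mono (antiW w)) := by
  induction w using FreeMonoid.inductionOn' with
  | one =>
    have : mono (1 : Word) = (1 : R2) := rfl
    have h1 : antiW (1 : Word) = 1 := rfl
    rw [h1, this, map_one, anti_one]
  | of_mul l t ih =>
    have hm : mono (FreeMonoid.of l * t) = mono (FreeMonoid.of l) * mono t := by
      simp [mono, MonoidAlgebra.single_mul_single]
    have hm2 : mono (antiW t * antiW (FreeMonoid.of l))
        = mono (antiW t) * mono (antiW (FreeMonoid.of l)) := by
      simp [mono, MonoidAlgebra.single_mul_single]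
    have hfix : anti (subst (a • X + b • Y) (c • X + d • Y) (mono (FreeMonoid.of l)))
        = subst (a • X + b • Y) (c • X + d • Y) (mono (FreeMonoid.of l)) := by
      have : mono (FreeMonoid.of l) = MonoidAlgebra.of ℚ Word (FreeMonoid.of l) := rfl
      rw [this]
      have h2 : (subst (a • X + b • Y) (c • X + d • Y)) (MonoidAlgebra.of ℚ Word (FreeMonoid.of l))
          = if l = 0 then a • X + b • Y else c • X + d • Y := by
        simp [subst, MonoidAlgebra.lift_of]
      rw [h2]
      split <;> exact anti_comb _ _
    have haw : antiW (FreeMonoid.of l * t) = antiW t * antiW (FreeMonoid.of l) := antiW_mul _ _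
    have hof : antiW (FreeMonoid.of l) = FreeMonoid.of l := rfl
    rw [hm, map_mul, anti_mul, hfix, ih, haw, hm2, map_mul, hof]

/-- an antipalindromic homogeneous polynomial stays antipalindromic
    under any substitution x ↦ a·x + b·y, y ↦ c·x + d·y. -/
theorem stmt8 (n : ℕ) (g : R2) (hg : IsHomog n g) (a b c d : ℚ)
    (hanti : Antipal n g) :
    Antipal n (subst (a • X + b • Y) (c • X + d • Y) g) := by
  have key : ∀ f : R2, anti (subst (a • X + b • Y) (c • X + d • Y) f)
      = subst (a • X + b • Y) (c • X + d • Y) (anti f) := by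
    intro f
    induction f using MonoidAlgebra.induction_linear with
    | zero => simp [anti, MonoidAlgebra.mapDomain_zero]
    | add p q hp hq => rw [map_add, anti_add, hp, hq, anti_add, map_add]
    | single w q =>
      have hs : (MonoidAlgebra.single w q : R2) = q • mono w := by
        rw [mono]
        rw [MonoidAlgebra.smul_single, smul_eq_mul, mul_one]
      rw [hs, map_smul, anti_smul, anti_subst_mono, anti_smul,
        show anti (mono w) = mono (antiW w) from anti_single w 1, map_smul]
  unfold Antipal at hanti ⊢
  conv_lhs => rw [hanti]
  rw [map_smul, key]

end DblSh
end
end
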